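/- Let (M, P(M)) be a stably embedded elementary pair of nontrivial models of DOAG in which E_∞ fails (no element of M is greater than every element of P(M)) and E_{0+} fails (no positive element of M is smaller than every positive element of P(M)). Then M = P(M). -/

import Mathlib

open FirstOrder FirstOrder.Language

/-- The Presburger language `L_Pres = {0, 1, +, −, <, (≡ₙ)_{n>1}}`:
constant symbols `0`, `1` (indexed by `Fin 2`), binary function symbols `+`, `−`
(indexed by `Fin 2`), and binary relation symbols `<` (index `none`) and `≡ₙ` for `n > 1`. -/
def LPres : FirstOrder.Language where
  Functions := fun n =>
    match n with
    | 0 => Fin 2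
    | 2 => Fin 2
    | _ => Empty
  Relations := fun n =>
    match n with
    | 2 => Option {k : ℕ // 1 < k}
    | _ => Empty

/-- The language `L_P`: `L_Pres` together with an additional unary predicate symbol `P`. -/
def LP : FirstOrder.Language where
  Functions := fun n =>
    match n with
    | 0 => Fin 2
    | 2 => Fin 2
    | _ => Empty
  Relations := fun n =>
    match n with
    | 1 => Unit
    | 2 => Option {k : ℕ // 1 < k}
    | _ => Empty

/-- The standard `L_Pres`-structure on an ordered abelian group `M`, where the constant `1`
is interpreted by the given element `one` (the minimal positive element if there is one,
and `0` otherwise). -/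
def presStr (M : Type*) [AddCommGroup M] [LinearOrder M] [IsOrderedAddMonoid M] (one : M) : LPres.Structure M where
  funMap {n} :=
    match n with
    | 0 => fun c _ => if (show Fin 2 from c) = 0 then 0 else one
    | 1 => fun f _ => nomatch f
    | 2 => fun f x => if (show Fin 2 from f) = 0 then x 0 + x 1 else x 0 - x 1
    | _ + 3 => fun f _ => nomatch f
  RelMap {n} :=
    match n with
    | 0 => fun r _ => nomatch r
    | 1 => fun r _ => nomatch r
    | 2 => fun r x =>
      match (show Option {k : ℕ // 1 < k} from r) with
      | none => x 0 < x 1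
      | some k => ∃ c : M, x 0 - x 1 = (k : ℕ) • c
    | _ + 3 => fun r _ => nomatch r

/-- The standard `L_P`-structure of a pair `(M, P)`. -/
def pairStr (M : Type*) [AddCommGroup M] [LinearOrder M] [IsOrderedAddMonoid M] (one : M) (P : Set M) :
    LP.Structure M where
  funMap {n} :=
    match n with
    | 0 => fun c _ => if (show Fin 2 from c) = 0 then 0 else one
    | 1 => fun f _ => nomatch f
    | 2 => fun f x => if (show Fin 2 from f) = 0 then x 0 + x 1 else x 0 - x 1
    | _ + 3 => fun f _ => nomatch f
  RelMap {n} :=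
    match n with
    | 0 => fun r _ => nomatch r
    | 1 => fun _ x => x 0 ∈ P
    | 2 => fun r x =>
      match (show Option {k : ℕ // 1 < k} from r) with
      | none => x 0 < x 1
      | some k => ∃ c : M, x 0 - x 1 = (k : ℕ) • c
    | _ + 3 => fun r _ => nomatch r

/-- `P` is the underlying set of an `L_Pres`-elementary substructure of `M`. -/
def IsElemPair {M : Type*} [LPres.Structure M] (P : Set M) : Prop :=
  ∃ S : LPres.ElementarySubstructure M, (S : Set M) = P

/-- The pair `(M, P)` is stably embedded: for every tuple `a` of `M` and every formula
`φ(x, y)`, the trace `{b ∈ P^m : M ⊨ φ(a, b)}` is definable in `P` with parameters from `P`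
(equivalently, since `P ≼ M`, it is cut out by an `L_Pres`-formula with parameters in `P`). -/
def IsStablyEmbeddedPair {M : Type*} [LPres.Structure M] (P : Set M) : Prop :=
  ∀ (k m : ℕ) (a : Fin k → M) (φ : LPres.Formula (Fin k ⊕ Fin m)),
    ∃ (l : ℕ) (ψ : LPres.Formula (Fin l ⊕ Fin m)) (p : Fin l → M),
      (∀ i, p i ∈ P) ∧
        ∀ b : Fin m → M, (∀ i, b i ∈ P) →
          (φ.Realize (Sum.elim a b) ↔ ψ.Realize (Sum.elim p b))

/-- A (nontrivial) ordered abelian group is divisible when `n • y = x` is solvable. -/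
def DivisibleOAG (M : Type*) [AddCommGroup M] [LinearOrder M] [IsOrderedAddMonoid M] : Prop :=
  ∀ n : ℕ, 0 < n → ∀ x : M, ∃ y : M, n • y = x

/-- The `<`-symbol of `L_P`. -/
def ltR : LP.Relations 2 := none

/-- The `P`-symbol of `L_P`. -/
def pR : LP.Relations 1 := Unit.unit

/-- The term `0` of `L_P`. -/
def zeroT {α : Type*} {n : ℕ} : LP.Term (α ⊕ Fin n) :=
  Constants.term (show LP.Constants from (0 : Fin 2))

/-- The sentence `E_∞ : (∃ x)(∀ y)(P(y) → y < x)`. -/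
def Einfty : LP.Sentence :=
  BoundedFormula.ex (BoundedFormula.all
    ((pR.boundedFormula₁ &1).imp (ltR.boundedFormula₂ &1 &0)))

/-- The sentence `E_{0⁺} : (∃ x)(∀ y)((P(y) ∧ 0 < y) → (0 < x ∧ x < y))`. -/
def Ezeroplus : LP.Sentence :=
  BoundedFormula.ex (BoundedFormula.all
    (((pR.boundedFormula₁ &1) ⊓ (ltR.boundedFormula₂ zeroT &1)).imp
      ((ltR.boundedFormula₂ zeroT &0) ⊓ (ltR.boundedFormula₂ &0 &1))))

section OrderHelpers

variable {M : Type} [AddCommGroup M] [LinearOrder M] [IsOrderedAddMonoid M]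

/-- In a divisible group we can divide by any nonzero integer. -/
theorem zdiv_exists (hdiv : DivisibleOAG M) {m : ℤ} (hm : m ≠ 0) (c : M) :
    ∃ y : M, m • y = c := by
  obtain ⟨y, hy⟩ := hdiv m.natAbs (Int.natAbs_pos.2 hm) c
  rcases Int.natAbs_eq m with h | h
  · exact ⟨y, by rw [h, natCast_zsmul, hy]⟩
  · exact ⟨-y, by rw [h, neg_zsmul, zsmul_neg, neg_neg, natCast_zsmul, hy]⟩

theorem exists_between_div (hdiv : DivisibleOAG M) {u v : M} (h : u < v) :
    ∃ w, u < w ∧ w < v := by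
  obtain ⟨y, hy⟩ := zdiv_exists hdiv (m := 2) (by norm_num) (v - u)
  have h2 : (0 : M) < v - u := sub_pos.2 h
  have hy0 : 0 < y := by
    by_contra hy0
    push_neg at hy0
    have : v - u ≤ 0 := by
      rw [← hy, two_zsmul]
      exact add_nonpos hy0 hy0
    exact absurd h2 (not_lt.2 this)
  refine ⟨u + y, lt_add_of_pos_right u hy0, ?_⟩
  have : y < v - u := by
    rw [← hy, two_zsmul]
    exact lt_add_of_pos_left y hy0
  calc u + y < u + (v - u) := add_lt_add_right this u
    _ = v := by abel

/-- A nontrivial linearly ordered group has a positive element. -/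
theorem exists_pos_elt (M : Type) [AddCommGroup M] [LinearOrder M] [IsOrderedAddMonoid M] [Nontrivial M] :
    ∃ e : M, 0 < e := by
  obtain ⟨e, he⟩ := exists_ne (0 : M)
  rcases lt_or_gt_of_ne he with h | h
  · exact ⟨-e, by simpa using h⟩
  · exact ⟨e, h⟩

theorem list_max_mem : ∀ (l : List M), l ≠ [] → ∃ m ∈ l, ∀ a ∈ l, a ≤ m := by
    intro l hl
    induction l with
    | nil => exact absurd rfl hl
    | cons c t ih =>
      rcases eq_or_ne t [] with rfl | ht
      · exact ⟨c, by simp⟩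
      · obtain ⟨m, hm, hm2⟩ := ih ht
        rcases le_total c m with hc | hc
        · exact ⟨m, List.mem_cons_of_mem _ hm, by
            intro a ha
            rcases List.mem_cons.1 ha with rfl | ha
            · exact hc
            · exact hm2 a ha⟩
        · exact ⟨c, List.mem_cons_self, by
            intro a ha
            rcases List.mem_cons.1 ha with rfl | ha
            · exact le_rfl
            · exact (hm2 a ha).trans hc⟩
theorem list_min_mem : ∀ (l : List M), l ≠ [] → ∃ m ∈ l, ∀ a ∈ l, m ≤ a := by
    intro l hl
    obtain ⟨m, hm, hm2⟩ := list_max_mem (l.map Neg.neg) (by simpa using hl)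
    obtain ⟨m', hm', rfl⟩ := List.mem_map.1 hm
    exact ⟨m', hm', fun a ha => by
      have := hm2 (-a) (List.mem_map_of_mem ha)
      simpa using this⟩

/-- Given two finite lists, all of `A` below all of `B`, find an element strictly between. -/
theorem exists_between_lists (hdiv : DivisibleOAG M) [Nontrivial M] (A B : List M)
    (h : ∀ a ∈ A, ∀ b ∈ B, a < b) :
    ∃ x : M, (∀ a ∈ A, a < x) ∧ (∀ b ∈ B, x < b) := by
  obtain ⟨e, he⟩ := exists_pos_elt M
  have maxmem := list_max_mem (M := M)
  have minmem := list_min_mem (M := M)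
  rcases eq_or_ne A [] with rfl | hA
  · rcases eq_or_ne B [] with rfl | hB
    · exact ⟨0, by simp, by simp⟩
    · obtain ⟨m, hm, hm2⟩ := minmem B hB
      exact ⟨m - e, by simp, fun b hb => lt_of_lt_of_le (by simpa using he) (hm2 b hb)⟩
  · rcases eq_or_ne B [] with rfl | hB
    · obtain ⟨m, hm, hm2⟩ := maxmem A hA
      exact ⟨m + e, fun a ha => lt_of_le_of_lt (hm2 a ha) (by simpa using he), by simp⟩
    · obtain ⟨mA, hmA, hmA2⟩ := maxmem A hA
      obtain ⟨mB, hmB, hmB2⟩ := minmem B hB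
      obtain ⟨x, hx1, hx2⟩ := exists_between_div hdiv (h mA hmA mB hmB)
      exact ⟨x, fun a ha => lt_of_le_of_lt (hmA2 a ha) hx1,
        fun b hb => lt_of_lt_of_le hx2 (hmB2 b hb)⟩

end OrderHelpers
section DNFMachinery

variable {M : Type} [AddCommGroup M] [LinearOrder M] [IsOrderedAddMonoid M] {α : Type} [Fintype α] {n : ℕ}

/-- Linear forms with integer coefficients over variables `α ⊕ Fin n`. -/
abbrev LinForm (α : Type) (n : ℕ) : Type := (α → ℤ) × (Fin n → ℤ)

/-- Evaluation of a linear form. -/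
def evalF [Fintype α] (f : LinForm α n) (v : α → M) (w : Fin n → M) : M :=
  (∑ i, f.1 i • v i) + (∑ j, f.2 j • w j)

theorem evalF_add (f g : LinForm α n) (v : α → M) (w : Fin n → M) :
    evalF (f + g) v w = evalF f v w + evalF g v w := by
  simp only [evalF, Prod.fst_add, Prod.snd_add, Pi.add_apply, add_zsmul,
    Finset.sum_add_distrib]
  abel

theorem evalF_neg (f : LinForm α n) (v : α → M) (w : Fin n → M) :
    evalF (-f) v w = -evalF f v w := by
  simp only [evalF, Prod.fst_neg, Prod.snd_neg, Pi.neg_apply, neg_zsmul]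
  rw [Finset.sum_neg_distrib, Finset.sum_neg_distrib]
  abel

theorem evalF_sub (f g : LinForm α n) (v : α → M) (w : Fin n → M) :
    evalF (f - g) v w = evalF f v w - evalF g v w := by
  rw [sub_eq_add_neg, evalF_add, evalF_neg, sub_eq_add_neg]

theorem evalF_zsmul (m : ℤ) (f : LinForm α n) (v : α → M) (w : Fin n → M) :
    evalF (m • f) v w = m • evalF f v w := by
  simp only [evalF, Prod.smul_fst, Prod.smul_snd, Pi.smul_apply, smul_eq_mul,
    mul_smul, smul_add, Finset.smul_sum]

theorem evalF_zero (v : α → M) (w : Fin n → M) :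
    evalF (0 : LinForm α n) v w = 0 := by
  simp [evalF]

/-- Restriction of a linear form over `Fin (n+1)` forgetting the last coordinate. -/
def restrictF (f : LinForm α (n + 1)) : LinForm α n :=
  (f.1, fun j => f.2 j.castSucc)

theorem evalF_snoc (f : LinForm α (n + 1)) (v : α → M) (w : Fin n → M) (x : M) :
    evalF f v (Fin.snoc w x) = evalF (restrictF f) v w + f.2 (Fin.last n) • x := by
  simp only [evalF, restrictF, Fin.sum_univ_castSucc, Fin.snoc_castSucc, Fin.snoc_last]
  abel

/-- Atoms: a linear form together with a flag (`true` = equality, `false` = strict `< 0`). -/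
abbrev LinAtom (α : Type) (n : ℕ) : Type := LinForm α n × Bool

def evalA [Fintype α] (a : LinAtom α n) (v : α → M) (w : Fin n → M) : Prop :=
  match a.2 with
  | true => evalF a.1 v w = 0
  | false => evalF a.1 v w < 0

def evalC [Fintype α] (c : List (LinAtom α n)) (v : α → M) (w : Fin n → M) : Prop :=
  ∀ a ∈ c, evalA a v w

def evalD [Fintype α] (L : List (List (LinAtom α n))) (v : α → M) (w : Fin n → M) : Prop :=
  ∃ c ∈ L, evalC c v w

theorem evalC_singleton (a : LinAtom α n) (v : α → M) (w : Fin n → M) :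
    evalC [a] v w ↔ evalA a v w := by
  constructor
  · intro h; exact h a (by simp)
  · intro h a' ha'
    rw [List.mem_singleton.1 ha']
    exact h

theorem evalD_two (a₁ a₂ : LinAtom α n) (v : α → M) (w : Fin n → M) :
    evalD [ [a₁], [a₂] ] v w ↔ evalA a₁ v w ∨ evalA a₂ v w := by
  constructor
  · rintro ⟨c, hc, h⟩
    rcases List.mem_cons.1 hc with rfl | hc
    · exact Or.inl ((evalC_singleton _ _ _).1 h)
    · rcases List.mem_cons.1 hc with rfl | hc
      · exact Or.inr ((evalC_singleton _ _ _).1 h)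
      · exact absurd hc List.not_mem_nil
  · rintro (h | h)
    · exact ⟨[a₁], by simp, (evalC_singleton _ _ _).2 h⟩
    · exact ⟨[a₂], by simp, (evalC_singleton _ _ _).2 h⟩

/-- DNF for the negation of an atom. -/
def negA (a : LinAtom α n) : List (List (LinAtom α n)) :=
  match a.2 with
  | true => [ [(a.1, false)], [(-a.1, false)] ]
  | false => [ [(-a.1, false)], [(a.1, true)] ]

theorem evalD_negA (a : LinAtom α n) (v : α → M) (w : Fin n → M) :
    evalD (negA a) v w ↔ ¬ evalA a v w := by
  rcases a with ⟨f, b⟩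
  have hneg : evalF (-f) v w = -evalF f v w := evalF_neg f v w
  cases b
  · show evalD [ [(-f, false)], [(f, true)] ] v w ↔ ¬ evalA (f, false) v w
    rw [evalD_two]
    show (evalF (-f) v w < 0 ∨ evalF f v w = 0) ↔ ¬ evalF f v w < 0
    rw [hneg, neg_lt_zero, not_lt]
    constructor
    · rintro (h | h)
      · exact le_of_lt h
      · exact le_of_eq h.symm
    · intro h
      rcases lt_or_eq_of_le h with h | h
      · exact Or.inl h
      · exact Or.inr h.symm
  · show evalD [ [(f, false)], [(-f, false)] ] v w ↔ ¬ evalA (f, true) v w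
    rw [evalD_two]
    show (evalF f v w < 0 ∨ evalF (-f) v w < 0) ↔ ¬ evalF f v w = 0
    rw [hneg, neg_lt_zero]
    constructor
    · rintro (h | h) he
      · rw [he] at h; exact lt_irrefl 0 h
      · rw [he] at h; exact lt_irrefl 0 h
    · intro h
      rcases lt_trichotomy (evalF f v w) 0 with h' | h' | h'
      · exact Or.inl h'
      · exact absurd h' h
      · exact Or.inr h'

/-- DNF for the negation of a clause. -/
def negC (c : List (LinAtom α n)) : List (List (LinAtom α n)) :=
  c.flatMap negA

theorem evalD_negC (c : List (LinAtom α n)) (v : α → M) (w : Fin n → M) :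
    evalD (negC c) v w ↔ ¬ evalC c v w := by
  simp only [negC, evalD, List.mem_flatMap]
  constructor
  · rintro ⟨c', ⟨a, ha, ha'⟩, h⟩
    intro hc
    exact (evalD_negA a v w).1 ⟨c', ha', h⟩ (hc a ha)
  · intro h
    have : ∃ a ∈ c, ¬ evalA a v w := by
      by_contra h2
      push_neg at h2
      exact h h2
    obtain ⟨a, ha, ha'⟩ := this
    obtain ⟨c', hc', h'⟩ := (evalD_negA a v w).2 ha'
    exact ⟨c', ⟨a, ha, hc'⟩, h'⟩

/-- Conjunction of two DNFs. -/
def dAnd (L₁ L₂ : List (List (LinAtom α n))) : List (List (LinAtom α n)) :=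
  L₁.flatMap fun c₁ => L₂.map fun c₂ => c₁ ++ c₂

theorem evalD_dAnd (L₁ L₂ : List (List (LinAtom α n))) (v : α → M) (w : Fin n → M) :
    evalD (dAnd L₁ L₂) v w ↔ evalD L₁ v w ∧ evalD L₂ v w := by
  simp only [dAnd, evalD, List.mem_flatMap, List.mem_map]
  constructor
  · rintro ⟨c, ⟨c₁, hc₁, c₂, hc₂, rfl⟩, h⟩
    rw [evalC] at h
    exact ⟨⟨c₁, hc₁, fun a ha => h a (List.mem_append.2 (Or.inl ha))⟩,
      ⟨c₂, hc₂, fun a ha => h a (List.mem_append.2 (Or.inr ha))⟩⟩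
  · rintro ⟨⟨c₁, hc₁, h₁⟩, ⟨c₂, hc₂, h₂⟩⟩
    refine ⟨c₁ ++ c₂, ⟨c₁, hc₁, c₂, hc₂, rfl⟩, ?_⟩
    intro a ha
    rcases List.mem_append.1 ha with ha | ha
    · exact h₁ a ha
    · exact h₂ a ha

/-- DNF for the negation of a DNF. -/
def negD (L : List (List (LinAtom α n))) : List (List (LinAtom α n)) :=
  L.foldr (fun c acc => dAnd (negC c) acc) [ [] ]

theorem evalD_negD (L : List (List (LinAtom α n))) (v : α → M) (w : Fin n → M) :
    evalD (negD L) v w ↔ ¬ evalD L v w := by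
  induction L with
  | nil =>
    simp only [negD, List.foldr_nil, evalD]
    constructor
    · rintro h ⟨c, hc, h2⟩
      exact absurd hc List.not_mem_nil
    · intro h
      exact ⟨[], List.mem_singleton_self _, fun a ha => absurd ha List.not_mem_nil⟩
  | cons c t ih =>
    have hfold : negD (c :: t) = dAnd (negC c) (negD t) := List.foldr_cons
    rw [hfold, evalD_dAnd, evalD_negC, ih]
    simp only [evalD, List.mem_cons]
    constructor
    · rintro ⟨h1, h2⟩ ⟨c', hc', h⟩
      rcases hc' with rfl | hc'
      · exact h1 h
      · exact h2 ⟨c', hc', h⟩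
    · intro h
      exact ⟨fun hc => h ⟨c, Or.inl rfl, hc⟩, fun ⟨c', hc', hc⟩ => h ⟨c', Or.inr hc', hc⟩⟩

end DNFMachinery
section SmulOrder

variable {M : Type} [AddCommGroup M] [LinearOrder M] [IsOrderedAddMonoid M]

theorem zsmul_lt_iff_pos {m : ℤ} (hm : 0 < m) {u v : M} : m • u < m • v ↔ u < v :=
  zsmul_lt_zsmul_iff_right hm

theorem zsmul_lt_iff_neg {m : ℤ} (hm : m < 0) {u v : M} : m • u < m • v ↔ v < u := by
  have h : (0 : ℤ) < -m := by omega
  constructor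
  · intro h2
    have : (-m) • v < (-m) • u := by
      rw [neg_zsmul, neg_zsmul]
      exact neg_lt_neg h2
    exact (zsmul_lt_zsmul_iff_right h).1 this
  · intro h2
    have : (-m) • v < (-m) • u := (zsmul_lt_zsmul_iff_right h).2 h2
    rw [neg_zsmul, neg_zsmul] at this
    exact lt_of_neg_lt_neg this

theorem zsmul_neg_iff_pos {m : ℤ} (hm : 0 < m) {u : M} : m • u < 0 ↔ u < 0 := by
  have := zsmul_lt_iff_pos (M := M) hm (u := u) (v := 0)
  rwa [smul_zero] at this

theorem zsmul_eq_zero_iff {m : ℤ} (hm : m ≠ 0) {u : M} : m • u = 0 ↔ u = 0 := by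
  constructor
  · intro h
    have := zsmul_right_injective (G := M) hm
    apply this
    simpa using h
  · rintro rfl; simp

/-- Division by a nonzero integer, as a (noncomputable) function. -/
noncomputable def zdivEl (m : ℤ) (c : M) : M :=
  haveI := Classical.propDecidable (∃ y : M, m • y = c)
  if h : ∃ y : M, m • y = c then Classical.choose h else 0

theorem zdivEl_spec (hdiv : DivisibleOAG M) {m : ℤ} (hm : m ≠ 0) (c : M) :
    m • zdivEl m c = c := by
  rw [zdivEl, dif_pos (zdiv_exists hdiv hm c)]
  exact Classical.choose_spec (zdiv_exists hdiv hm c)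

end SmulOrder
section FourierMotzkin

variable {M : Type} [AddCommGroup M] [LinearOrder M] [IsOrderedAddMonoid M] {α : Type} [Fintype α] {n : ℕ}

/-- The coefficient of the last (innermost bound) variable. -/
def mcoef (a : LinAtom α (n + 1)) : ℤ := a.1.2 (Fin.last n)

/-- The rest of the form of an atom, on the remaining variables. -/
def restA (a : LinAtom α (n + 1)) : LinForm α n := restrictF a.1

theorem evalA_snoc_false (f : LinForm α (n + 1)) (v : α → M) (w : Fin n → M) (x : M) :
    evalA (f, false) v (Fin.snoc w x) ↔
      evalF (restA (f, false)) v w + mcoef (f, false) • x < 0 := by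
  show evalF f v (Fin.snoc w x) < 0 ↔ _
  rw [evalF_snoc]
  rfl

theorem evalA_snoc_true (f : LinForm α (n + 1)) (v : α → M) (w : Fin n → M) (x : M) :
    evalA (f, true) v (Fin.snoc w x) ↔
      evalF (restA (f, true)) v w + mcoef (f, true) • x = 0 := by
  show evalF f v (Fin.snoc w x) = 0 ↔ _
  rw [evalF_snoc]
  rfl

theorem evalA_false (g : LinForm α n) (v : α → M) (w : Fin n → M) :
    evalA (g, false) v w ↔ evalF g v w < 0 := Iff.rfl

theorem evalA_true (g : LinForm α n) (v : α → M) (w : Fin n → M) :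
    evalA (g, true) v w ↔ evalF g v w = 0 := Iff.rfl

/-- Fourier–Motzkin elimination of the innermost variable from a single clause. -/
theorem exClause [Nontrivial M] (hdiv : DivisibleOAG M) (c : List (LinAtom α (n + 1))) :
    ∃ c' : List (LinAtom α n), ∀ (v : α → M) (w : Fin n → M),
      (∃ x : M, evalC c v (Fin.snoc w x)) ↔ evalC c' v w := by
  by_cases hA : ∃ a₀ ∈ c, a₀.2 = true ∧ mcoef a₀ ≠ 0
  · -- substitution case
    obtain ⟨a₀, ha₀c, ha₀eq, hm₀⟩ := hA
    set m₀ : ℤ := mcoef a₀ with hm₀def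
    have hm₀sq : (0 : ℤ) < m₀ * m₀ := mul_self_pos.2 hm₀
    refine ⟨c.map (fun a => ((m₀ * m₀) • restA a - (mcoef a * m₀) • restA a₀, a.2)), ?_⟩
    intro v w
    have key : ∀ (a : LinAtom α (n + 1)) (x : M), m₀ • x = -(evalF (restA a₀) v w) →
        evalF ((m₀ * m₀) • restA a - (mcoef a * m₀) • restA a₀) v w
          = (m₀ * m₀) • (evalF (restA a) v w + mcoef a • x) := by
      intro a x hx
      rw [evalF_sub, evalF_zsmul, evalF_zsmul, smul_add]
      have h2 : (m₀ * m₀) • (mcoef a • x) = (mcoef a * m₀) • (m₀ • x) := by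
        rw [smul_smul, smul_smul]
        ring_nf
      rw [h2, hx, smul_neg, sub_eq_add_neg]
    constructor
    · rintro ⟨x, hx⟩
      have hx₀ := hx a₀ ha₀c
      have hsub : m₀ • x = -(evalF (restA a₀) v w) := by
        rcases a₀ with ⟨f₀, b₀⟩
        cases b₀
        · exact absurd ha₀eq (by simp)
        · rw [evalA_snoc_true] at hx₀
          exact eq_neg_of_add_eq_zero_right hx₀
      intro a' ha'
      obtain ⟨a, hac, rfl⟩ := List.mem_map.1 ha'
      have hval := key a x hsub
      have ha := hx a hac
      rcases a with ⟨f, b⟩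
      cases b
      · rw [evalA_snoc_false] at ha
        rw [evalA_false, hval]
        exact (zsmul_neg_iff_pos hm₀sq).2 ha
      · rw [evalA_snoc_true] at ha
        rw [evalA_true, hval, ha, smul_zero]
    · intro h
      obtain ⟨x, hx⟩ := zdiv_exists hdiv hm₀ (-(evalF (restA a₀) v w))
      refine ⟨x, ?_⟩
      intro a hac
      have hmem := List.mem_map_of_mem
        (f := fun a => ((m₀ * m₀) • restA a - (mcoef a * m₀) • restA a₀, a.2)) hac
      have ha' := h _ hmem
      have hval := key a x hx
      rcases a with ⟨f, b⟩
      cases b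
      · rw [evalA_false, hval] at ha'
        rw [evalA_snoc_false]
        exact (zsmul_neg_iff_pos hm₀sq).1 ha'
      · rw [evalA_true, hval] at ha'
        rw [evalA_snoc_true]
        exact (zsmul_eq_zero_iff (by positivity)).1 ha'
  · -- inequality case
    push_neg at hA
    classical
    set zeros := c.filter (fun a => decide (mcoef a = 0)) with hzeros
    set lows := c.filter (fun a => decide (mcoef a < 0)) with hlows
    set ups := c.filter (fun a => decide (0 < mcoef a)) with hups
    refine ⟨zeros.map (fun a => (restA a, a.2))
        ++ lows.flatMap (fun a₁ => ups.map
            (fun a₂ => (mcoef a₂ • restA a₁ - mcoef a₁ • restA a₂, false))), ?_⟩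
    have memzeros : ∀ a : LinAtom α (n + 1), a ∈ zeros ↔ a ∈ c ∧ mcoef a = 0 := by
      intro a; rw [hzeros]; simp [List.mem_filter]
    have memlows : ∀ a : LinAtom α (n + 1), a ∈ lows ↔ a ∈ c ∧ mcoef a < 0 := by
      intro a; rw [hlows]; simp [List.mem_filter]
    have memups : ∀ a : LinAtom α (n + 1), a ∈ ups ↔ a ∈ c ∧ 0 < mcoef a := by
      intro a; rw [hups]; simp [List.mem_filter]
    intro v w
    constructor
    · rintro ⟨x, hx⟩
      intro a' ha'
      rcases List.mem_append.1 ha' with h1 | h1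
      · obtain ⟨a, hamem, rfl⟩ := List.mem_map.1 h1
        have ham : a ∈ c ∧ mcoef a = 0 := (memzeros a).1 hamem
        have ha := hx a ham.1
        rcases a with ⟨f, b⟩
        cases b
        · rw [evalA_snoc_false, ham.2, zero_zsmul, add_zero] at ha
          rwa [evalA_false]
        · rw [evalA_snoc_true, ham.2, zero_zsmul, add_zero] at ha
          rwa [evalA_true]
      · obtain ⟨a₁, ha₁mem, h2⟩ := List.mem_flatMap.1 h1
        obtain ⟨a₂, ha₂mem, rfl⟩ := List.mem_map.1 h2
        have ha₁m : a₁ ∈ c ∧ mcoef a₁ < 0 := (memlows a₁).1 ha₁mem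
        have ha₂m : a₂ ∈ c ∧ 0 < mcoef a₂ := (memups a₂).1 ha₂mem
        have hb₁ : a₁.2 = false := by
          rcases hb : a₁.2 with _ | _
          · rfl
          · exact absurd (hA a₁ ha₁m.1 hb) (by omega)
        have hb₂ : a₂.2 = false := by
          rcases hb : a₂.2 with _ | _
          · rfl
          · exact absurd (hA a₂ ha₂m.1 hb) (by omega)
        have h₁ := hx a₁ ha₁m.1
        have h₂ := hx a₂ ha₂m.1
        rw [evalA_false]
        rw [evalF_sub, evalF_zsmul, evalF_zsmul]
        have hup₁ : evalF (restA a₁) v w + mcoef a₁ • x < 0 := by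
          rcases a₁ with ⟨f₁, b₁⟩
          cases b₁
          · rwa [evalA_snoc_false] at h₁
          · exact absurd hb₁ (by simp)
        have hup₂ : evalF (restA a₂) v w + mcoef a₂ • x < 0 := by
          rcases a₂ with ⟨f₂, b₂⟩
          cases b₂
          · rwa [evalA_snoc_false] at h₂
          · exact absurd hb₂ (by simp)
        have hs₁ : mcoef a₂ • (evalF (restA a₁) v w + mcoef a₁ • x) < 0 :=
          (zsmul_neg_iff_pos ha₂m.2).2 hup₁
        have hs₂ : (-mcoef a₁) • (evalF (restA a₂) v w + mcoef a₂ • x) < 0 :=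
          (zsmul_neg_iff_pos (by omega)).2 hup₂
        have hsum := add_lt_add hs₁ hs₂
        rw [add_zero] at hsum
        calc mcoef a₂ • evalF (restA a₁) v w - mcoef a₁ • evalF (restA a₂) v w
            = mcoef a₂ • (evalF (restA a₁) v w + mcoef a₁ • x)
              + (-mcoef a₁) • (evalF (restA a₂) v w + mcoef a₂ • x) := by
              rw [smul_add, smul_add, smul_smul, smul_smul, neg_mul,
                neg_zsmul (evalF (restA a₂) v w) (mcoef a₁),
                neg_zsmul x (mcoef a₁ * mcoef a₂),
                mul_comm (mcoef a₂) (mcoef a₁), sub_eq_add_neg]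
              abel
          _ < 0 := hsum
    · intro h
      set β : LinAtom α (n + 1) → M := fun a => zdivEl (mcoef a) (-(evalF (restA a) v w))
        with hβ
      have hβspec : ∀ a : LinAtom α (n + 1), mcoef a ≠ 0 →
          mcoef a • β a = -(evalF (restA a) v w) :=
        fun a ha => zdivEl_spec hdiv ha _
      have hpair : ∀ a₁ ∈ lows, ∀ a₂ ∈ ups, β a₁ < β a₂ := by
        intro a₁ h₁ a₂ h₂
        have ha₁m : mcoef a₁ < 0 := ((memlows a₁).1 h₁).2
        have ha₂m : 0 < mcoef a₂ := ((memups a₂).1 h₂).2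
        have hmem : ((mcoef a₂ • restA a₁ - mcoef a₁ • restA a₂ : LinForm α n), false)
            ∈ zeros.map (fun a => (restA a, a.2))
              ++ lows.flatMap (fun a₁ => ups.map
                (fun a₂ => (mcoef a₂ • restA a₁ - mcoef a₁ • restA a₂, false))) := by
          refine List.mem_append.2 (Or.inr ?_)
          exact List.mem_flatMap.2 ⟨a₁, h₁, List.mem_map.2 ⟨a₂, h₂, rfl⟩⟩
        have hlt := h _ hmem
        rw [evalA_false, evalF_sub, evalF_zsmul, evalF_zsmul] at hlt
        have hk : (0 : ℤ) < (-mcoef a₁) * mcoef a₂ := by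
          apply mul_pos <;> omega
        rw [← zsmul_lt_iff_pos hk]
        have e₁ : ((-mcoef a₁) * mcoef a₂) • β a₁ = mcoef a₂ • evalF (restA a₁) v w := by
          rw [mul_comm, ← smul_smul, neg_zsmul, hβspec a₁ (by omega), neg_neg]
        have e₂ : ((-mcoef a₁) * mcoef a₂) • β a₂ = mcoef a₁ • evalF (restA a₂) v w := by
          rw [← smul_smul, hβspec a₂ (by omega), neg_zsmul, smul_neg, neg_neg]
        rw [e₁, e₂]
        exact sub_neg.1 hlt
      obtain ⟨x, hxA, hxB⟩ := exists_between_lists hdiv (lows.map β) (ups.map β) (by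
        rintro bA hbA bB hbB
        obtain ⟨a₁, h₁, rfl⟩ := List.mem_map.1 hbA
        obtain ⟨a₂, h₂, rfl⟩ := List.mem_map.1 hbB
        exact hpair a₁ h₁ a₂ h₂)
      refine ⟨x, ?_⟩
      intro a hac
      rcases lt_trichotomy (mcoef a) 0 with hm | hm | hm
      · have hmem : a ∈ lows := (memlows a).2 ⟨hac, hm⟩
        have hβx : β a < x := hxA _ (List.mem_map_of_mem (f := β) hmem)
        have hb : a.2 = false := by
          rcases hb : a.2 with _ | _
          · rfl
          · exact absurd (hA a hac hb) (by omega)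
        have hlt : mcoef a • x < mcoef a • β a := (zsmul_lt_iff_neg hm).2 hβx
        rw [hβspec a (by omega)] at hlt
        rcases a with ⟨f, b⟩
        cases b
        · rw [evalA_snoc_false]
          have := add_lt_add_right hlt (evalF (restA (f, false)) v w)
          simpa using this
        · exact absurd hb (by simp)
      · have hmem : a ∈ zeros := (memzeros a).2 ⟨hac, hm⟩
        have ha' := h _ (List.mem_append.2 (Or.inl (List.mem_map_of_mem
          (f := fun a => (restA a, a.2)) hmem)))
        rcases a with ⟨f, b⟩
        cases b
        · rw [evalA_false] at ha'
          rw [evalA_snoc_false]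
          rw [show mcoef (f, false) = 0 from hm, zero_zsmul, add_zero]
          exact ha'
        · rw [evalA_true] at ha'
          rw [evalA_snoc_true]
          rw [show mcoef (f, true) = 0 from hm, zero_zsmul, add_zero]
          exact ha'
      · have hmem : a ∈ ups := (memups a).2 ⟨hac, hm⟩
        have hβx : x < β a := hxB _ (List.mem_map_of_mem (f := β) hmem)
        have hb : a.2 = false := by
          rcases hb : a.2 with _ | _
          · rfl
          · exact absurd (hA a hac hb) (by omega)
        have hlt : mcoef a • x < mcoef a • β a := (zsmul_lt_iff_pos hm).2 hβx
        rw [hβspec a (by omega)] at hlt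
        rcases a with ⟨f, b⟩
        cases b
        · rw [evalA_snoc_false]
          have := add_lt_add_right hlt (evalF (restA (f, false)) v w)
          simpa using this
        · exact absurd hb (by simp)

end FourierMotzkin
section ExDNF

variable {M : Type} [AddCommGroup M] [LinearOrder M] [IsOrderedAddMonoid M] {α : Type} [Fintype α] {n : ℕ}

theorem evalD_append (L₁ L₂ : List (List (LinAtom α n))) (v : α → M) (w : Fin n → M) :
    evalD (L₁ ++ L₂) v w ↔ evalD L₁ v w ∨ evalD L₂ v w := by
  simp only [evalD, List.mem_append]
  constructor
  · rintro ⟨c, (hc | hc), h⟩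
    · exact Or.inl ⟨c, hc, h⟩
    · exact Or.inr ⟨c, hc, h⟩
  · rintro (⟨c, hc, h⟩ | ⟨c, hc, h⟩)
    · exact ⟨c, Or.inl hc, h⟩
    · exact ⟨c, Or.inr hc, h⟩

theorem exDNF [Nontrivial M] (hdiv : DivisibleOAG M) (L : List (List (LinAtom α (n + 1)))) :
    ∃ L' : List (List (LinAtom α n)), ∀ (v : α → M) (w : Fin n → M),
      (∃ x : M, evalD L v (Fin.snoc w x)) ↔ evalD L' v w := by
  classical
  have hch : ∀ c : List (LinAtom α (n + 1)), ∃ c' : List (LinAtom α n),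
      ∀ (v : α → M) (w : Fin n → M), (∃ x : M, evalC c v (Fin.snoc w x)) ↔ evalC c' v w :=
    fun c => exClause hdiv c
  choose F hF using hch
  refine ⟨L.map F, ?_⟩
  intro v w
  constructor
  · rintro ⟨x, c, hc, h⟩
    exact ⟨F c, List.mem_map_of_mem (f := F) hc, (hF c v w).1 ⟨x, h⟩⟩
  · rintro ⟨c', hc', h⟩
    obtain ⟨c, hc, rfl⟩ := List.mem_map.1 hc'
    obtain ⟨x, hx⟩ := (hF c v w).2 h
    exact ⟨x, c, hc, hx⟩

end ExDNF

section Master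

variable {M : Type} [AddCommGroup M] [LinearOrder M] [IsOrderedAddMonoid M]

local instance locPres : LPres.Structure M := presStr M 0

theorem term_form {α : Type} [Fintype α] [DecidableEq α] {n : ℕ}
    (t : LPres.Term (α ⊕ Fin n)) :
    ∃ f : LinForm α n, ∀ (v : α → M) (w : Fin n → M),
      Term.realize (Sum.elim v w) t = evalF f v w := by
  induction t with
  | var i =>
    rcases i with a | j
    · refine ⟨(fun a' => if a' = a then 1 else 0, 0), ?_⟩
      intro v w
      simp only [Term.realize, Sum.elim_inl, evalF]
      have h1 : ∀ a' : α, ((if a' = a then (1 : ℤ) else 0) • v a')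
          = if a' = a then v a' else 0 := by
        intro a'; split <;> simp
      rw [Finset.sum_congr rfl (fun a' _ => h1 a')]
      simp [Finset.sum_ite_eq']
    · refine ⟨(0, fun j' => if j' = j then 1 else 0), ?_⟩
      intro v w
      simp only [Term.realize, Sum.elim_inr, evalF]
      have h1 : ∀ j' : Fin n, ((if j' = j then (1 : ℤ) else 0) • w j')
          = if j' = j then w j' else 0 := by
        intro j'; split <;> simp
      rw [Finset.sum_congr rfl (fun j' _ => h1 j')]
      simp [Finset.sum_ite_eq']
  | func F ts ih =>
    rename_i l
    match l, F, ts, ih with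
    | 0, F, ts, ih =>
      refine ⟨0, ?_⟩
      intro v w
      have : Term.realize (Sum.elim v w) (Term.func F ts)
          = (if (show Fin 2 from F) = 0 then (0 : M) else 0) := rfl
      rw [this, evalF_zero, ite_self]
    | 1, F, ts, ih => exact Empty.elim F
    | 2, F, ts, ih =>
      obtain ⟨f₀, hf₀⟩ := ih 0
      obtain ⟨f₁, hf₁⟩ := ih 1
      by_cases hF : (show Fin 2 from F) = 0
      · refine ⟨f₀ + f₁, ?_⟩
        intro v w
        have : Term.realize (Sum.elim v w) (Term.func F ts)
            = if (show Fin 2 from F) = 0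
              then Term.realize (Sum.elim v w) (ts 0) + Term.realize (Sum.elim v w) (ts 1)
              else Term.realize (Sum.elim v w) (ts 0) - Term.realize (Sum.elim v w) (ts 1) := rfl
        rw [this, if_pos hF, evalF_add, hf₀, hf₁]
      · refine ⟨f₀ - f₁, ?_⟩
        intro v w
        have : Term.realize (Sum.elim v w) (Term.func F ts)
            = if (show Fin 2 from F) = 0
              then Term.realize (Sum.elim v w) (ts 0) + Term.realize (Sum.elim v w) (ts 1)
              else Term.realize (Sum.elim v w) (ts 0) - Term.realize (Sum.elim v w) (ts 1) := rfl
        rw [this, if_neg hF, evalF_sub, hf₀, hf₁]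
    | (l + 3), F, ts, ih => exact Empty.elim F

theorem master [Nontrivial M] (hdiv : DivisibleOAG M) {α : Type} [Fintype α] [DecidableEq α]
    {n : ℕ} (φ : LPres.BoundedFormula α n) :
    ∃ L : List (List (LinAtom α n)), ∀ (v : α → M) (w : Fin n → M),
      φ.Realize v w ↔ evalD L v w := by
  induction φ with
  | falsum =>
    refine ⟨[], ?_⟩
    intro v w
    constructor
    · intro h; exact False.elim h
    · rintro ⟨c, hc, h⟩; exact absurd hc List.not_mem_nil
  | equal t₁ t₂ =>
    obtain ⟨f₁, hf₁⟩ := term_form (M := M) t₁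
    obtain ⟨f₂, hf₂⟩ := term_form (M := M) t₂
    refine ⟨[ [ (f₁ - f₂, true) ] ], ?_⟩
    intro v w
    have hreal : (BoundedFormula.equal t₁ t₂).Realize v w ↔
        Term.realize (Sum.elim v w) t₁ = Term.realize (Sum.elim v w) t₂ := Iff.rfl
    rw [hreal, hf₁, hf₂]
    constructor
    · intro h
      refine ⟨_, List.mem_singleton_self _, (evalC_singleton _ _ _).2 ?_⟩
      rw [evalA_true, evalF_sub, sub_eq_zero]
      exact h
    · rintro ⟨c, hc, h⟩
      rw [List.mem_singleton.1 hc] at h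
      have := (evalC_singleton _ _ _).1 h
      rw [evalA_true, evalF_sub, sub_eq_zero] at this
      exact this
  | rel R ts =>
    rename_i l
    match l, R, ts with
    | 0, R, ts => exact Empty.elim R
    | 1, R, ts => exact Empty.elim R
    | 2, R, ts =>
      obtain ⟨f₁, hf₁⟩ := term_form (M := M) (ts 0)
      obtain ⟨f₂, hf₂⟩ := term_form (M := M) (ts 1)
      match R with
      | none =>
        refine ⟨[ [ (f₁ - f₂, false) ] ], ?_⟩
        intro v w
        have hreal : (BoundedFormula.rel (L := LPres) (show LPres.Relations 2 from none) ts).Realize v w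
            ↔ Term.realize (Sum.elim v w) (ts 0) < Term.realize (Sum.elim v w) (ts 1) :=
          Iff.rfl
        rw [hreal, hf₁, hf₂]
        constructor
        · intro h
          refine ⟨_, List.mem_singleton_self _, (evalC_singleton _ _ _).2 ?_⟩
          rw [evalA_false, evalF_sub, sub_neg]
          exact h
        · rintro ⟨c, hc, h⟩
          rw [List.mem_singleton.1 hc] at h
          have := (evalC_singleton _ _ _).1 h
          rw [evalA_false, evalF_sub, sub_neg] at this
          exact this
      | some k =>
        refine ⟨[ [] ], ?_⟩
        intro v w
        constructor
        · intro h
          exact ⟨[], List.mem_singleton_self _, fun a ha => absurd ha List.not_mem_nil⟩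
        · intro h
          have hreal : (BoundedFormula.rel (L := LPres) (show LPres.Relations 2 from some k) ts).Realize v w
              ↔ ∃ cc : M, Term.realize (Sum.elim v w) (ts 0)
                  - Term.realize (Sum.elim v w) (ts 1) = (k : ℕ) • cc := Iff.rfl
          rw [hreal]
          obtain ⟨y, hy⟩ := hdiv (k : ℕ) (by have := k.2; omega)
            (Term.realize (Sum.elim v w) (ts 0) - Term.realize (Sum.elim v w) (ts 1))
          exact ⟨y, hy.symm⟩
    | (l + 3), R, ts => exact Empty.elim R
  | imp φ₁ φ₂ ih₁ ih₂ =>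
    obtain ⟨L₁, hL₁⟩ := ih₁
    obtain ⟨L₂, hL₂⟩ := ih₂
    refine ⟨negD L₁ ++ L₂, ?_⟩
    intro v w
    rw [BoundedFormula.realize_imp, hL₁ v w, hL₂ v w, evalD_append, evalD_negD]
    tauto
  | all φ ih =>
    obtain ⟨L₀, hL₀⟩ := ih
    obtain ⟨L', hL'⟩ := exDNF hdiv (negD L₀)
    refine ⟨negD L', ?_⟩
    intro v w
    rw [BoundedFormula.realize_all, evalD_negD]
    rw [← hL' v w]
    constructor
    · intro h
      rintro ⟨x, hx⟩
      rw [evalD_negD] at hx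
      exact hx ((hL₀ v (Fin.snoc w x)).1 (h x))
    · intro h x
      rw [hL₀ v (Fin.snoc w x)]
      by_contra hc
      exact h ⟨x, (evalD_negD L₀ v (Fin.snoc w x)).2 hc⟩

/-- The addition term. -/
def addT {β : Type} (s t : LPres.Term β) : LPres.Term β :=
  Term.func (show LPres.Functions 2 from (0 : Fin 2)) ![s, t]

/-- The zero term. -/
def zeroTp {β : Type} : LPres.Term β :=
  Term.func (show LPres.Functions 0 from (0 : Fin 2)) (fun i => i.elim0)

/-- The `n`-fold sum of a term. -/
def nsmulT {β : Type} : ℕ → LPres.Term β → LPres.Term β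
  | 0, _ => zeroTp
  | k + 1, t => addT t (nsmulT k t)

theorem realize_addT {β : Type} (s t : LPres.Term β) (v : β → M) :
    Term.realize v (addT s t) = Term.realize v s + Term.realize v t := by
  have h : Term.realize v (addT s t)
      = if (show Fin 2 from (0 : Fin 2)) = 0
        then Term.realize v s + Term.realize v t
        else Term.realize v s - Term.realize v t := rfl
  rw [h, if_pos rfl]

theorem realize_zeroTp {β : Type} (v : β → M) :
    Term.realize v (zeroTp : LPres.Term β) = 0 := by
  have h : Term.realize v (zeroTp : LPres.Term β)
      = if (show Fin 2 from (0 : Fin 2)) = 0 then (0 : M) else 0 := rfl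
  rw [h, ite_self]

theorem realize_nsmulT {β : Type} (k : ℕ) (t : LPres.Term β) (v : β → M) :
    Term.realize v (nsmulT k t) = k • Term.realize v t := by
  induction k with
  | zero => rw [show nsmulT 0 t = zeroTp from rfl, realize_zeroTp, zero_nsmul]
  | succ k ih =>
    rw [show nsmulT (k + 1) t = addT t (nsmulT k t) from rfl, realize_addT, ih,
      succ_nsmul, add_comm]

/-- An elementary substructure of a divisible group is divisible. -/
theorem elemSub_div (hdiv : DivisibleOAG M) (S : LPres.ElementarySubstructure M)
    (k : ℕ) (hk : 0 < k) (x : M) (hx : x ∈ S) :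
    ∃ y : M, y ∈ S ∧ k • y = x := by
  set δ : LPres.Formula (Fin 1) :=
    BoundedFormula.ex (BoundedFormula.equal (Term.var (Sum.inl 0))
      (nsmulT k (Term.var (Sum.inr 0)))) with hδ
  have hsnocM : ∀ y : M, ((Fin.snoc (default : Fin 0 → M) y : Fin 1 → M) (0 : Fin 1)) = y := by
    intro y; simp [Fin.snoc]
  have hM : δ.Realize (fun _ : Fin 1 => x) := by
    rw [hδ, Formula.Realize, BoundedFormula.realize_ex]
    obtain ⟨y, hy⟩ := hdiv k hk x
    refine ⟨y, ?_⟩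
    show Term.realize (Sum.elim (fun _ : Fin 1 => x) (Fin.snoc default y))
        (Term.var (Sum.inl 0))
      = Term.realize (Sum.elim (fun _ : Fin 1 => x) (Fin.snoc default y))
        (nsmulT k (Term.var (Sum.inr 0)))
    rw [realize_nsmulT]
    show x = k • ((Fin.snoc (default : Fin 0 → M) y : Fin 1 → M) (0 : Fin 1))
    rw [hsnocM y]
    exact hy.symm
  have htrans := S.isElementary' δ (fun _ : Fin 1 => ⟨x, hx⟩)
  have hM' : δ.Realize ((fun (z : S) => (z : M)) ∘ (fun _ : Fin 1 => (⟨x, hx⟩ : S))) := hM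
  have hS : δ.Realize (M := S) (fun _ : Fin 1 => ⟨x, hx⟩) := htrans.1 hM'
  rw [hδ, Formula.Realize, BoundedFormula.realize_ex] at hS
  obtain ⟨y, hy⟩ := hS
  have hterm : ∀ (t : LPres.Term (Fin 1 ⊕ Fin 1)) (u : Fin 1 ⊕ Fin 1 → S),
      ((Term.realize u t : S) : M) = Term.realize (fun i => ((u i : S) : M)) t := by
    intro t u
    have h := HomClass.realize_term (L := LPres)
      (Substructure.subtype ((S : LPres.Substructure M))) (t := t) (v := u)
    exact h.symm
  have hy' : Term.realize (Sum.elim (fun _ : Fin 1 => (⟨x, hx⟩ : S)) (Fin.snoc (default : Fin 0 → S) y))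
        (Term.var (Sum.inl 0))
      = Term.realize (Sum.elim (fun _ : Fin 1 => (⟨x, hx⟩ : S)) (Fin.snoc (default : Fin 0 → S) y))
        (nsmulT k (Term.var (Sum.inr 0))) := hy
  have hmap := congrArg (((↑) : S → M)) hy'
  rw [hterm, hterm] at hmap
  rw [realize_nsmulT] at hmap
  refine ⟨(y : M), y.2, ?_⟩
  rw [show Term.realize (fun i => ((Sum.elim (fun _ : Fin 1 => (⟨x, hx⟩ : S))
        (Fin.snoc default y) i : S) : M)) (Term.var (Sum.inl (0 : Fin 1))) = x from rfl] at hmap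
  rw [show (Term.realize (fun i => ((Sum.elim (fun _ : Fin 1 => (⟨x, hx⟩ : S))
        (Fin.snoc default y) i : S) : M)) (Term.var (Sum.inr (0 : Fin 1))) : M)
      = (((Fin.snoc (default : Fin 0 → S) y : Fin 1 → S) (0 : Fin 1) : S) : M) from rfl] at hmap
  rw [show ((Fin.snoc (default : Fin 0 → S) y : Fin 1 → S) (0 : Fin 1)) = y from (by simp [Fin.snoc])] at hmap
  exact hmap.symm
end Master

/-- If `(M, P)` is a stably embedded elementary pair of nontrivial models of
DOAG in which `E_∞` fails (no element of `M` is greater than every element of `P`) and `E_{0⁺}`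
fails (no positive element of `M` is smaller than every positive element of `P`), then `M = P`. -/
theorem DOAG_pair_no_Einfty_no_Ezeroplus_trivial
    (M : Type) [AddCommGroup M] [LinearOrder M] [IsOrderedAddMonoid M] [Nontrivial M] (hdiv : DivisibleOAG M)
    (P : Set M)
    (helem : @IsElemPair M (presStr M 0) P)
    (hse : @IsStablyEmbeddedPair M (presStr M 0) P)
    (hnoinf : ¬ ∃ x : M, ∀ y ∈ P, y < x)
    (hnozero : ¬ ∃ x : M, 0 < x ∧ ∀ y ∈ P, 0 < y → x < y) :
    P = Set.univ := by
  letI : LPres.Structure M := presStr M 0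
  ext a
  simp only [Set.mem_univ, iff_true]
  by_contra haP
  obtain ⟨S, hS⟩ := helem
  have hmem : ∀ x : M, x ∈ P ↔ x ∈ S.toSubstructure := by
    intro x
    rw [← hS]
    exact Iff.rfl
  -- closure properties of P
  have h0 : (0 : M) ∈ P := by
    rw [hmem]
    have h := S.toSubstructure.fun_mem (show LPres.Functions 0 from (0 : Fin 2))
      (fun i => i.elim0) (fun i => i.elim0)
    have he : Structure.funMap (M := M) (show LPres.Functions 0 from (0 : Fin 2))
        (fun i => (i.elim0 : M)) = (if (show Fin 2 from (0 : Fin 2)) = 0 then (0 : M) else 0) :=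
      rfl
    rwa [he, ite_self] at h
  have hadd : ∀ x ∈ P, ∀ y ∈ P, x + y ∈ P := by
    intro x hx y hy
    rw [hmem]
    have h := S.toSubstructure.fun_mem (show LPres.Functions 2 from (0 : Fin 2))
      ![x, y] (by
        intro i
        fin_cases i
        · exact (hmem x).1 hx
        · exact (hmem y).1 hy)
    have he : Structure.funMap (M := M) (show LPres.Functions 2 from (0 : Fin 2)) ![x, y]
        = (if (show Fin 2 from (0 : Fin 2)) = 0 then x + y else x - y) := rfl
    rwa [he, if_pos rfl] at h
  have hneg : ∀ x ∈ P, -x ∈ P := by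
    intro x hx
    rw [hmem]
    have h := S.toSubstructure.fun_mem (show LPres.Functions 2 from (1 : Fin 2))
      ![0, x] (by
        intro i
        fin_cases i
        · exact (hmem 0).1 h0
        · exact (hmem x).1 hx)
    have he : Structure.funMap (M := M) (show LPres.Functions 2 from (1 : Fin 2)) ![0, x]
        = (if (show Fin 2 from (1 : Fin 2)) = 0 then 0 + x else 0 - x) := rfl
    rw [he, if_neg (by decide), zero_sub] at h
    exact h
  set PG : AddSubgroup M :=
    { carrier := P
      zero_mem' := h0
      add_mem' := fun hx hy => hadd _ hx _ hy
      neg_mem' := fun hx => hneg _ hx } with hPG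
  have hPGmem : ∀ x : M, x ∈ PG ↔ x ∈ P := fun x => Iff.rfl
  -- divisibility of P
  have hPdiv : ∀ (m : ℤ), m ≠ 0 → ∀ c ∈ P, ∃ β ∈ P, m • β = c := by
    intro m hm c hc
    obtain ⟨y, hyS, hy⟩ := elemSub_div hdiv S m.natAbs (Int.natAbs_pos.2 hm) c ((hmem c).1 hc)
    have hyP : y ∈ P := (hmem y).2 hyS
    rcases Int.natAbs_eq m with h | h
    · exact ⟨y, hyP, by rw [h, natCast_zsmul]; exact hy⟩
    · refine ⟨-y, hneg y hyP, ?_⟩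
      rw [h, neg_zsmul, zsmul_neg, neg_neg, natCast_zsmul]
      exact hy
  -- density facts
  have hzero' : ∀ x : M, 0 < x → ∃ q ∈ P, 0 < q ∧ q ≤ x := by
    intro x hx
    by_contra h
    push_neg at h
    exact hnozero ⟨x, hx, h⟩
  have hinf' : ∀ x : M, ∃ y ∈ P, x ≤ y := by
    intro x
    by_contra h
    push_neg at h
    exact hnoinf ⟨x, h⟩
  have habove : ∃ b ∈ P, a < b := by
    obtain ⟨y, hyP, hy⟩ := hinf' a
    refine ⟨y, hyP, lt_of_le_of_ne hy ?_⟩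
    intro he
    exact haP (he ▸ hyP)
  have hbelow : ∃ b ∈ P, b < a := by
    obtain ⟨y, hyP, hy⟩ := hinf' (-a)
    refine ⟨-y, hneg y hyP, ?_⟩
    have h2 : -y ≤ a := by
      rw [neg_le]
      exact hy
    refine lt_of_le_of_ne h2 ?_
    intro he
    exact haP (he ▸ hneg y hyP)
  have hlow : ∀ γ ∈ P, γ < a → ∃ b ∈ P, γ < b ∧ b < a := by
    intro γ hγ hγa
    obtain ⟨q, hqP, hq0, hqle⟩ := hzero' (a - γ) (sub_pos.2 hγa)
    have hbP : γ + q ∈ P := hadd γ hγ q hqP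
    refine ⟨γ + q, hbP, lt_add_of_pos_right γ hq0, ?_⟩
    have hle : γ + q ≤ a := by
      have := add_le_add_right hqle γ
      rwa [add_sub_cancel] at this
    refine lt_of_le_of_ne hle ?_
    intro he
    exact haP (he ▸ hbP)
  have hhigh : ∀ δ ∈ P, a < δ → ∃ b ∈ P, a < b ∧ b < δ := by
    intro δ hδ hδa
    obtain ⟨q, hqP, hq0, hqle⟩ := hzero' (δ - a) (sub_pos.2 hδa)
    have hbP : δ - q ∈ P := by
      rw [sub_eq_add_neg]
      exact hadd δ hδ (-q) (hneg q hqP)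
    have hle : a ≤ δ - q := by
      rw [le_sub_iff_add_le]
      rw [le_sub_iff_add_le] at hqle
      calc a + q = q + a := add_comm a q
        _ ≤ δ := hqle
    refine ⟨δ - q, hbP, lt_of_le_of_ne hle ?_, sub_lt_self δ hq0⟩
    intro he
    exact haP (he ▸ hbP)
  -- apply stable embeddedness to the formula `y < x`
  set φ : LPres.Formula (Fin 1 ⊕ Fin 1) :=
    BoundedFormula.rel (show LPres.Relations 2 from none)
      ![Term.var (Sum.inl (Sum.inr 0)), Term.var (Sum.inl (Sum.inl 0))] with hφdef
  have hφ : ∀ (v : (Fin 1 ⊕ Fin 1) → M), φ.Realize v ↔ v (Sum.inr 0) < v (Sum.inl 0) :=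
    fun v => Iff.rfl
  obtain ⟨l, ψ, p, hpP, hiff⟩ := hse 1 1 (fun _ => a) φ
  have hab : ∀ b : M, b ∈ P → (b < a ↔ ψ.Realize (Sum.elim p (fun _ : Fin 1 => b))) := by
    intro b hb
    have h := hiff (fun _ => b) (fun i => hb)
    exact (hφ (Sum.elim (fun _ => a) (fun _ => b))).symm.trans h
  obtain ⟨L, hL⟩ := master hdiv (α := Fin l ⊕ Fin 1) ψ
  have hL' : ∀ b : M, b ∈ P →
      (b < a ↔ evalD L (Sum.elim p (fun _ : Fin 1 => b)) (default : Fin 0 → M)) := by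
    intro b hb
    exact (hab b hb).trans (hL (Sum.elim p (fun _ : Fin 1 => b)) default)
  -- decompose atoms
  set mA : LinForm (Fin l ⊕ Fin 1) 0 → ℤ := fun f => f.1 (Sum.inr 0) with hmA
  set cA : LinForm (Fin l ⊕ Fin 1) 0 → M := fun f => ∑ i : Fin l, f.1 (Sum.inl i) • p i
    with hcA
  have hevalF : ∀ (f : LinForm (Fin l ⊕ Fin 1) 0) (b : M),
      evalF f (Sum.elim p (fun _ : Fin 1 => b)) (default : Fin 0 → M) = cA f + mA f • b := by
    intro f b
    rw [evalF]
    have h2 : (∑ j : Fin 0, f.2 j • (default : Fin 0 → M) j) = 0 := by simp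
    rw [h2, add_zero, Fintype.sum_sum_type]
    congr 1
    rw [Fin.sum_univ_one]
    rfl
  have hcP : ∀ f, cA f ∈ P := by
    intro f
    rw [← hPGmem]
    exact AddSubgroup.sum_mem PG (fun i _ => AddSubgroup.zsmul_mem PG
      ((hPGmem (p i)).2 (hpP i)) _)
  have hcrit : ∀ f : LinForm (Fin l ⊕ Fin 1) 0,
      ∃ β : M, β ∈ P ∧ (mA f ≠ 0 → mA f • β = -(cA f)) := by
    intro f
    by_cases hm : mA f = 0
    · exact ⟨0, h0, fun h => absurd hm h⟩
    · obtain ⟨β, hβP, hβ⟩ := hPdiv (mA f) hm (-(cA f)) ((hPGmem _).1 (PG.neg_mem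
        ((hPGmem _).2 (hcP f))))
      exact ⟨β, hβP, fun _ => hβ⟩
  choose critF hcritP hcritEq using hcrit
  set Bs : List M := (L.flatMap id).map (fun atm => critF atm.1) with hBs
  have hBsP : ∀ β ∈ Bs, β ∈ P := by
    intro β hβ
    obtain ⟨atm, hatm, rfl⟩ := List.mem_map.1 (hBs ▸ hβ)
    exact hcritP atm.1
  have hBsne : ∀ β ∈ Bs, β ≠ a := by
    intro β hβ he
    exact haP (he ▸ hBsP β hβ)
  -- pick b < a and b' > a avoiding all critical points in between
  have hgetb : ∃ b ∈ P, b < a ∧ ∀ β ∈ Bs, β < a → β < b := by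
    by_cases hf : Bs.filter (fun β => decide (β < a)) = []
    · obtain ⟨b, hbP, hba⟩ := hbelow
      refine ⟨b, hbP, hba, ?_⟩
      intro β hβ hβa
      have : β ∈ Bs.filter (fun β => decide (β < a)) :=
        List.mem_filter.2 ⟨hβ, decide_eq_true hβa⟩
      rw [hf] at this
      exact absurd this List.not_mem_nil
    · obtain ⟨γ, hγmem, hγmax⟩ := list_max_mem _ hf
      have hγ := List.mem_filter.1 hγmem
      have hγP : γ ∈ P := hBsP γ hγ.1
      have hγa : γ < a := of_decide_eq_true hγ.2
      obtain ⟨b, hbP, hγb, hba⟩ := hlow γ hγP hγa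
      refine ⟨b, hbP, hba, ?_⟩
      intro β hβ hβa
      exact lt_of_le_of_lt (hγmax β (List.mem_filter.2 ⟨hβ, decide_eq_true hβa⟩)) hγb
  have hgetb' : ∃ b' ∈ P, a < b' ∧ ∀ β ∈ Bs, a < β → b' < β := by
    by_cases hf : Bs.filter (fun β => decide (a < β)) = []
    · obtain ⟨b', hbP, hba⟩ := habove
      refine ⟨b', hbP, hba, ?_⟩
      intro β hβ hβa
      have : β ∈ Bs.filter (fun β => decide (a < β)) :=
        List.mem_filter.2 ⟨hβ, decide_eq_true hβa⟩
      rw [hf] at this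
      exact absurd this List.not_mem_nil
    · obtain ⟨γ, hγmem, hγmin⟩ := list_min_mem _ hf
      have hγ := List.mem_filter.1 hγmem
      have hγP : γ ∈ P := hBsP γ hγ.1
      have hγa : a < γ := of_decide_eq_true hγ.2
      obtain ⟨b', hbP, hab', hb'γ⟩ := hhigh γ hγP hγa
      refine ⟨b', hbP, hab', ?_⟩
      intro β hβ hβa
      exact lt_of_lt_of_le hb'γ (hγmin β (List.mem_filter.2 ⟨hβ, decide_eq_true hβa⟩))
  obtain ⟨b, hbP, hba, hbmax⟩ := hgetb
  obtain ⟨b', hb'P, hab', hb'min⟩ := hgetb'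
  -- b and b' relate identically to every critical point
  have hsame : ∀ β ∈ Bs, (b < β ↔ b' < β) ∧ (b = β ↔ b' = β) ∧ (β < b ↔ β < b') := by
    intro β hβ
    rcases lt_trichotomy β a with h | h | h
    · have h1 : β < b := hbmax β hβ h
      have h2 : β < b' := h1.trans (hba.trans hab')
      exact ⟨iff_of_false (asymm h1) (asymm h2),
        iff_of_false (fun he => absurd h1 (he ▸ lt_irrefl β)) (fun he => absurd h2 (he ▸ lt_irrefl β)),
        iff_of_true h1 h2⟩
    · exact absurd h (hBsne β hβ)
    · have h1 : b' < β := hb'min β hβ h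
      have h2 : b < β := (hba.trans hab').trans h1
      exact ⟨iff_of_true h2 h1,
        iff_of_false (fun he => absurd h2 (he ▸ lt_irrefl β)) (fun he => absurd h1 (he ▸ lt_irrefl β)),
        iff_of_false (asymm h2) (asymm h1)⟩
  -- each atom evaluates the same at b and b'
  have hatom : ∀ atm ∈ L.flatMap id,
      (evalA atm (Sum.elim p (fun _ : Fin 1 => b)) (default : Fin 0 → M)
        ↔ evalA atm (Sum.elim p (fun _ : Fin 1 => b')) (default : Fin 0 → M)) := by
    intro atm hatm
    rcases atm with ⟨f, bool⟩
    by_cases hm : mA f = 0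
    · have h1 : evalF f (Sum.elim p (fun _ : Fin 1 => b)) (default : Fin 0 → M)
          = evalF f (Sum.elim p (fun _ : Fin 1 => b')) (default : Fin 0 → M) := by
        rw [hevalF, hevalF, hm, zero_zsmul, zero_zsmul]
      cases bool
      · rw [evalA_false, evalA_false, h1]
      · rw [evalA_true, evalA_true, h1]
    · have hmβ : mA f • critF f = -(cA f) := hcritEq f hm
      have hβBs : critF f ∈ Bs := by
        rw [hBs]
        exact List.mem_map_of_mem (f := fun atm => critF atm.1) hatm
      obtain ⟨hlt, heq, hgt⟩ := hsame (critF f) hβBs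
      have key : ∀ t : M, (cA f + mA f • t < 0 ↔ mA f • t < mA f • critF f) := by
        intro t
        rw [add_comm, ← sub_neg_eq_add, sub_neg, ← hmβ]
      have key' : ∀ t : M, (cA f + mA f • t = 0 ↔ t = critF f) := by
        intro t
        rw [add_comm, add_eq_zero_iff_eq_neg, ← hmβ, zsmul_right_inj hm]
      cases bool
      · rw [evalA_false, evalA_false, hevalF, hevalF, key b, key b']
        rcases lt_or_gt_of_ne hm with hsgn | hsgn
        · rw [zsmul_lt_iff_neg hsgn, zsmul_lt_iff_neg hsgn]
          exact hgt
        · rw [zsmul_lt_iff_pos hsgn, zsmul_lt_iff_pos hsgn]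
          exact hlt
      · rw [evalA_true, evalA_true, hevalF, hevalF, key' b, key' b']
        exact heq
  -- hence the DNF evaluates the same, contradiction
  have hDNF : evalD L (Sum.elim p (fun _ : Fin 1 => b)) (default : Fin 0 → M)
      ↔ evalD L (Sum.elim p (fun _ : Fin 1 => b')) (default : Fin 0 → M) := by
    constructor
    · rintro ⟨c, hc, hcv⟩
      exact ⟨c, hc, fun atm hatm =>
        (hatom atm (List.mem_flatMap.2 ⟨c, hc, hatm⟩)).1 (hcv atm hatm)⟩
    · rintro ⟨c, hc, hcv⟩
      exact ⟨c, hc, fun atm hatm =>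
        (hatom atm (List.mem_flatMap.2 ⟨c, hc, hatm⟩)).2 (hcv atm hatm)⟩
  have h4 : b' < a := (hL' b' hb'P).2 (hDNF.1 ((hL' b hbP).1 hba))
  exact absurd h4 (not_lt.2 (le_of_lt hab'))
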